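/- arXiv:1607.00519 — 5 statements merged into one kernel-verified Lean document; each statement's English description precedes it below -/
import Mathlib

section
/- Let μ₁ and μ₂ be finite Borel measures on ℝⁿ with μ₁(ℝⁿ) = μ₂(ℝⁿ). Then μ₁(K) ≥ μ₂(K) for all symmetric convex bodies K if and only if ∫ F dμ₁ ≥ ∫ F dμ₂ for all even, non-negative, quasi-concave functions F: ℝⁿ → ℝ. -/
open MeasureTheory Metric EMetric Set

private lemma sum_dite_embed {ι : Type*} [Fintype ι] {m : ℕ} (g : ι ↪ Fin m)
    {β : Type*} [AddCommMonoid β] (F : ι → β) :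
    (∑ j : Fin m, if h : ∃ i, g i = j then F h.choose else 0) = ∑ i, F i := by
  classical
  rw [← Finset.sum_subset (Finset.subset_univ (Finset.univ.map g))
      (fun j _ hj => dif_neg (by simpa [Finset.mem_map] using hj))]
  rw [Finset.sum_map]
  refine Finset.sum_congr rfl fun i _ => ?_
  have h : ∃ i', g i' = g i := ⟨i, rfl⟩
  rw [dif_pos h]
  congr 1
  exact g.injective h.choose_spec

private lemma isCompact_convexHull_euclidean {n : ℕ} {s : Set (EuclideanSpace ℝ (Fin n))}
    (hs : IsCompact s) : IsCompact (convexHull ℝ s) := by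
  classical
  rcases s.eq_empty_or_nonempty with rfl | ⟨x₀, hx₀⟩
  · simp
  set m := n + 1 with hm
  set f : (Fin m → ℝ) × (Fin m → EuclideanSpace ℝ (Fin n)) → EuclideanSpace ℝ (Fin n) :=
    fun p => ∑ i, p.1 i • p.2 i with hf
  have hfc : Continuous f :=
    continuous_finset_sum _ fun i _ =>
      ((continuous_apply i).comp continuous_fst).smul ((continuous_apply i).comp continuous_snd)
  have hD : IsCompact ((stdSimplex ℝ (Fin m)) ×ˢ Set.univ.pi fun _ : Fin m => s) :=
    (isCompact_stdSimplex _ _).prod (isCompact_univ_pi fun _ => hs)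
  have himg : f '' ((stdSimplex ℝ (Fin m)) ×ˢ Set.univ.pi fun _ : Fin m => s)
      = convexHull ℝ s := by
    apply Subset.antisymm
    · rintro x ⟨⟨w, z⟩, ⟨⟨hw0, hw1⟩, hz⟩, rfl⟩
      exact (convex_convexHull ℝ s).sum_mem (fun i _ => hw0 i) hw1
        (fun i _ => subset_convexHull ℝ s (hz i (Set.mem_univ i)))
    · intro x hx
      obtain ⟨ι, hfin, z, w, hzs, hai, hwpos, hwsum, hrep⟩ :=
        eq_pos_convex_span_of_mem_convexHull hx
      have hcard : Fintype.card ι ≤ m := by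
        have h1 := hai.card_le_finrank_succ
        have h2 : Module.finrank ℝ (vectorSpan ℝ (Set.range z)) ≤ n := by
          have h3 := Submodule.finrank_le (vectorSpan ℝ (Set.range z))
          simpa [finrank_euclideanSpace_fin] using h3
        omega
      obtain ⟨g⟩ : Nonempty (ι ↪ Fin m) :=
        Function.Embedding.nonempty_of_card_le (by simpa using hcard)
      refine ⟨⟨fun j => if h : ∃ i, g i = j then w h.choose else 0,
              fun j => if h : ∃ i, g i = j then z h.choose else x₀⟩, ⟨⟨?_, ?_⟩, ?_⟩, ?_⟩
      · intro j; dsimp only; split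
        · exact (hwpos _).le
        · exact le_refl 0
      · rw [sum_dite_embed g w, hwsum]
      · intro j _; dsimp only; split
        · exact hzs ⟨_, rfl⟩
        · exact hx₀
      · show (∑ j : Fin m, _) = x
        have hj : ∀ j : Fin m, (if h : ∃ i, g i = j then w h.choose else 0) •
            (if h : ∃ i, g i = j then z h.choose else x₀)
            = (if h : ∃ i, g i = j then (fun i => w i • z i) h.choose else 0) := by
          intro j; split <;> simp
        rw [Finset.sum_congr rfl fun j _ => hj j, sum_dite_embed g (fun i => w i • z i), hrep]
  rw [← himg]
  exact hD.image hfc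


private lemma measure_le_of_compact_symm {n : ℕ} {μ₁ μ₂ : Measure (EuclideanSpace ℝ (Fin n))}
    [IsFiniteMeasure μ₁] [IsFiniteMeasure μ₂]
    (h : ∀ K : Set (EuclideanSpace ℝ (Fin n)), IsCompact K → Convex ℝ K →
        (interior K).Nonempty → K = -K → μ₂ K ≤ μ₁ K)
    {T : Set (EuclideanSpace ℝ (Fin n))} (hTc : IsCompact T) (hTconv : Convex ℝ T)
    (hTsymm : T = -T) : μ₂ T ≤ μ₁ T := by
  rcases T.eq_empty_or_nonempty with rfl | ⟨t, ht⟩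
  · simp
  have key : ∀ δ : ℝ, 0 < δ → μ₂ T ≤ μ₁ (cthickening δ T) := by
    intro δ hδ
    have h1 : IsCompact (cthickening δ T) := hTc.cthickening
    have h2 : Convex ℝ (cthickening δ T) := hTconv.cthickening δ
    have h3 : (interior (cthickening δ T)).Nonempty := by
      have hsub : thickening δ T ⊆ interior (cthickening δ T) :=
        interior_maximal (thickening_subset_cthickening δ T) isOpen_thickening
      exact ⟨t, hsub (self_subset_thickening hδ T ht)⟩
    have h4 : cthickening δ T = -(cthickening δ T) := by
      ext x
      simp only [Set.mem_neg, mem_cthickening_iff]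
      have : infEDist (-x) T = infEDist x T := by
        nth_rewrite 1 [hTsymm]
        exact infEDist_neg_neg x T
      rw [this]
    exact (measure_mono (self_subset_cthickening T)).trans (h _ h1 h2 h3 h4)
  have htend : Filter.Tendsto (fun δ => μ₁ (cthickening δ T)) (nhdsWithin 0 (Set.Ioi 0))
      (nhds (μ₁ T)) :=
    (tendsto_measure_cthickening_of_isClosed ⟨1, one_pos, measure_ne_top μ₁ _⟩
      hTc.isClosed).mono_left nhdsWithin_le_nhds
  refine ge_of_tendsto htend ?_
  filter_upwards [self_mem_nhdsWithin] with δ (hδ : δ ∈ Set.Ioi 0) using key δ hδ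

section helper
variable {n : ℕ} {μ₁ μ₂ : Measure (EuclideanSpace ℝ (Fin n))}
  [IsFiniteMeasure μ₁] [IsFiniteMeasure μ₂]

private lemma measure_le_of_convex_symm
    (h : ∀ K : Set (EuclideanSpace ℝ (Fin n)), IsCompact K → Convex ℝ K →
        (interior K).Nonempty → K = -K → μ₂ K ≤ μ₁ K)
    {C : Set (EuclideanSpace ℝ (Fin n))} (hC : MeasurableSet C) (hconv : Convex ℝ C)
    (hsymm : C = -C) : μ₂ C ≤ μ₁ C := by
  rw [hC.measure_eq_iSup_isCompact_of_ne_top (measure_ne_top μ₂ C)]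
  refine iSup_le fun K => iSup_le fun hKC => iSup_le fun hK => ?_
  set T := convexHull ℝ (K ∪ -K) with hT
  have hTc : IsCompact T := isCompact_convexHull_euclidean (hK.union hK.neg)
  have hTconv : Convex ℝ T := convex_convexHull ℝ _
  have hTsymm : T = -T := by
    rw [hT, ← convexHull_neg]
    congr 1
    ext x
    simp only [Set.mem_neg, Set.mem_union, neg_neg]
    tauto
  have hnegK : -K ⊆ C := by
    intro x hx
    rw [hsymm]
    exact Set.mem_neg.mpr (hKC (Set.mem_neg.mp hx))
  have hTC : T ⊆ C := convexHull_min (Set.union_subset hKC hnegK) hconv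
  calc μ₂ K ≤ μ₂ T := measure_mono ((Set.subset_union_left).trans (subset_convexHull ℝ _))
    _ ≤ μ₁ T := measure_le_of_compact_symm h hTc hTconv hTsymm
    _ ≤ μ₁ C := measure_mono hTC

end helper

theorem stmt0 (n : ℕ) (μ₁ μ₂ : Measure (EuclideanSpace ℝ (Fin n)))
    [IsFiniteMeasure μ₁] [IsFiniteMeasure μ₂]
    (hmass : μ₁ Set.univ = μ₂ Set.univ) :
    (∀ K : Set (EuclideanSpace ℝ (Fin n)), IsCompact K → Convex ℝ K →
        (interior K).Nonempty → K = -K → μ₂ K ≤ μ₁ K) ↔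
    (∀ F : EuclideanSpace ℝ (Fin n) → ℝ, Measurable F → (∀ x, 0 ≤ F x) →
        (∀ x, F (-x) = F x) → (∀ s : ℝ, Convex ℝ {x | s < F x}) →
        Integrable F μ₁ → Integrable F μ₂ →
        ∫ x, F x ∂μ₂ ≤ ∫ x, F x ∂μ₁) := by
  constructor
  · intro h F hFm hFnn hFeven hFconv hFi1 hFi2
    rw [integral_eq_lintegral_of_nonneg_ae (Filter.Eventually.of_forall hFnn)
        hFi2.aestronglyMeasurable,
      integral_eq_lintegral_of_nonneg_ae (Filter.Eventually.of_forall hFnn)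
        hFi1.aestronglyMeasurable]
    refine ENNReal.toReal_mono hFi1.lintegral_lt_top.ne ?_
    rw [lintegral_eq_lintegral_meas_lt μ₂ (Filter.Eventually.of_forall hFnn) hFm.aemeasurable,
      lintegral_eq_lintegral_meas_lt μ₁ (Filter.Eventually.of_forall hFnn) hFm.aemeasurable]
    refine lintegral_mono fun t => ?_
    refine measure_le_of_convex_symm h ?_ (hFconv t) ?_
    · exact measurableSet_lt measurable_const hFm
    · ext x
      simp [Set.mem_neg, hFeven]
  · intro h K hKc hKconv hKint hKsymm
    set F := K.indicator (fun _ => (1:ℝ)) with hF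
    have hmeas : MeasurableSet K := hKc.isClosed.measurableSet
    have hKneg : ∀ x, x ∈ K ↔ -x ∈ K := by
      intro x
      conv_lhs => rw [hKsymm]
      exact Set.mem_neg
    have hFm : Measurable F := measurable_const.indicator hmeas
    have hFnn : ∀ x, 0 ≤ F x := fun x => Set.indicator_nonneg (fun _ _ => zero_le_one) x
    have hFeven : ∀ x, F (-x) = F x := by
      intro x
      by_cases hx : x ∈ K
      · rw [hF, Set.indicator_of_mem hx, Set.indicator_of_mem ((hKneg x).mp hx)]
      · rw [hF, Set.indicator_of_notMem hx,
          Set.indicator_of_notMem (fun hc => hx ((hKneg x).mpr hc))]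
    have hFconv : ∀ s : ℝ, Convex ℝ {x | s < F x} := by
      intro s
      rcases lt_or_ge s 0 with hs | hs
      · have : {x | s < F x} = Set.univ :=
          Set.eq_univ_of_forall fun x => lt_of_lt_of_le hs (hFnn x)
        rw [this]; exact convex_univ
      rcases lt_or_ge s 1 with hs1 | hs1
      · have : {x | s < F x} = K := by
          ext x
          by_cases hx : x ∈ K
          · simp [hF, Set.indicator_of_mem hx, hx, hs1]
          · simp [hF, Set.indicator_of_notMem hx, hx, not_lt.mpr hs]
        rw [this]; exact hKconv
      · have : {x | s < F x} = ∅ := by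
          ext x
          by_cases hx : x ∈ K
          · simp [hF, Set.indicator_of_mem hx, not_lt.mpr hs1]
          · simp [hF, Set.indicator_of_notMem hx, not_lt.mpr (zero_le_one.trans hs1)]
        rw [this]; exact convex_empty
    have hInt : ∀ (μ : Measure (EuclideanSpace ℝ (Fin n))) [IsFiniteMeasure μ],
        Integrable F μ := by
      intro μ _
      rw [hF, integrable_indicator_iff hmeas]
      exact integrableOn_const (measure_lt_top μ K).ne
    have hle := h F hFm hFnn hFeven hFconv (hInt μ₁) (hInt μ₂)
    rw [hF] at hle
    rw [show (fun _ : EuclideanSpace ℝ (Fin n) => (1:ℝ)) = (1 : EuclideanSpace ℝ (Fin n) → ℝ)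
      from rfl, integral_indicator_one hmeas, integral_indicator_one hmeas] at hle
    exact (ENNReal.toReal_le_toReal (measure_ne_top μ₂ K) (measure_ne_top μ₁ K)).mp hle
end

section
/- Let E be a k-dimensional linear subspace of ℝⁿ and let μ, ν be finite Borel measures on ℝⁿ with equal total mass such that μ(K) ≥ ν(K) for every symmetric convex body K in ℝⁿ. Then for every symmetric convex body C in E, μ(P_E⁻¹(C)) ≥ ν(P_E⁻¹(C)), i.e., the marginal of μ on E is more peaked than the marginal of ν on E. -/
open MeasureTheory

theorem stmt2 (n k : ℕ) (E : Submodule ℝ (EuclideanSpace ℝ (Fin n)))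
    (hE : Module.finrank ℝ E = k)
    (μ ν : Measure (EuclideanSpace ℝ (Fin n))) [IsFiniteMeasure μ] [IsFiniteMeasure ν]
    (hmass : μ Set.univ = ν Set.univ)
    (hpeak : ∀ K : Set (EuclideanSpace ℝ (Fin n)), IsCompact K → Convex ℝ K →
      (interior K).Nonempty → K = -K → ν K ≤ μ K) :
    ∀ C : Set E, IsCompact C → Convex ℝ C → (interior C).Nonempty → C = -C →
      ν ((Submodule.orthogonalProjectionOnto E) ⁻¹' C) ≤ μ ((Submodule.orthogonalProjectionOnto E) ⁻¹' C) := by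
  intro C hC hconv hint hsym
  obtain ⟨c, hc⟩ := hint
  set P := Submodule.orthogonalProjectionOnto E with hP
  set x₀ : EuclideanSpace ℝ (Fin n) := (c : EuclideanSpace ℝ (Fin n)) with hx₀
  have hPx₀ : P x₀ = c := Submodule.orthogonalProjectionOnto_mem_subspace_eq_self c
  set S : Set (EuclideanSpace ℝ (Fin n)) := ⇑P ⁻¹' C with hS
  have hSclosed : IsClosed S := hC.isClosed.preimage P.continuous
  set K : ℕ → Set (EuclideanSpace ℝ (Fin n)) :=
    fun m => S ∩ Metric.closedBall 0 (‖x₀‖ + 1 + m) with hK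
  have hKsub : ∀ m, K m ⊆ S := fun m => Set.inter_subset_left
  have hKmono : Monotone K := by
    intro a b hab
    exact Set.inter_subset_inter_right _
      (Metric.closedBall_subset_closedBall (by
        have : (a : ℝ) ≤ b := Nat.cast_le.mpr hab
        linarith))
  have hUnion : ⋃ m, K m = S := by
    apply Set.Subset.antisymm (Set.iUnion_subset hKsub)
    intro x hx
    refine Set.mem_iUnion.mpr ⟨⌈‖x‖⌉₊, hx, ?_⟩
    simp only [Metric.mem_closedBall, dist_zero_right]
    have h1 : ‖x‖ ≤ (⌈‖x‖⌉₊ : ℝ) := Nat.le_ceil _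
    have h2 : (0 : ℝ) ≤ ‖x₀‖ := norm_nonneg _
    linarith
  have hpeakK : ∀ m, ν (K m) ≤ μ (K m) := by
    intro m
    apply hpeak
    · exact (isCompact_closedBall 0 _).inter_left hSclosed
    · exact (hconv.linear_preimage (P : EuclideanSpace ℝ (Fin n) →ₗ[ℝ] E)).inter
        (convex_closedBall 0 _)
    · refine ⟨x₀, ?_⟩
      have hopen : IsOpen (⇑P ⁻¹' interior C ∩ Metric.ball 0 (‖x₀‖ + 1 + m)) :=
        ((isOpen_interior.preimage P.continuous).inter Metric.isOpen_ball)
      have hmem : x₀ ∈ ⇑P ⁻¹' interior C ∩ Metric.ball 0 (‖x₀‖ + 1 + m) := by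
        constructor
        · simpa [hPx₀] using hc
        · simp only [Metric.mem_ball, dist_zero_right]
          have : (0 : ℝ) ≤ m := Nat.cast_nonneg _
          linarith
      have hsub : ⇑P ⁻¹' interior C ∩ Metric.ball 0 (‖x₀‖ + 1 + m) ⊆ K m :=
        Set.inter_subset_inter (Set.preimage_mono interior_subset) Metric.ball_subset_closedBall
      exact interior_maximal hsub hopen hmem
    · ext x
      simp only [Set.mem_neg, hK, Set.mem_inter_iff, Set.mem_preimage, hS,
        Metric.mem_closedBall, dist_zero_right, norm_neg, map_neg]
      constructor
      · rintro ⟨h1, h2⟩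
        refine ⟨?_, h2⟩
        rw [hsym] at h1; simpa using h1
      · rintro ⟨h1, h2⟩
        refine ⟨?_, h2⟩
        rw [hsym]; simpa using h1
  have hmeas : ∀ m, MeasurableSet (K m) :=
    fun m => (hSclosed.measurableSet).inter Metric.isClosed_closedBall.measurableSet
  calc ν S = ν (⋃ m, K m) := by rw [hUnion]
    _ = ⨆ m, ν (K m) := hKmono.directed_le.measure_iUnion
    _ ≤ ⨆ m, μ (K m) := iSup_mono hpeakK
    _ ≤ μ S := iSup_le fun m => measure_mono (hKsub m)
end

section
/- Let f: ℝⁿ → [0,∞) be rotationally invariant with ∫_{ℝⁿ} f = 1 and ‖f‖_∞ ≤ 1. Then for every star-shaped set K ⊆ ℝⁿ (compact, containing the origin in its interior, and with λx ∈ K whenever x ∈ K and λ ∈ [0,1]), ∫_K f(x) dx ≤ Vol(K ∩ B̃), where B̃ is the Euclidean ball of volume 1 centered at the origin. -/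
open MeasureTheory
open scoped ENNReal

theorem stmt5 (n : ℕ) (hn : 1 ≤ n) (f : EuclideanSpace ℝ (Fin n) → ℝ)
    (hmeas : Measurable f) (h0 : ∀ x, 0 ≤ f x)
    (hrot : ∀ x y : EuclideanSpace ℝ (Fin n), ‖x‖ = ‖y‖ → f x = f y)
    (hint : Integrable f) (hint1 : ∫ x, f x = 1) (hbd : ∀ x, f x ≤ 1)
    (R : ℝ) (hR : 0 < R)
    (hRvol : volume (Metric.closedBall (0 : EuclideanSpace ℝ (Fin n)) R) = 1)
    (K : Set (EuclideanSpace ℝ (Fin n))) (hKcpt : IsCompact K)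
    (hK0 : 0 ∈ interior K)
    (hKstar : ∀ x ∈ K, ∀ l : ℝ, l ∈ Set.Icc (0:ℝ) 1 → l • x ∈ K) :
    ∫ x in K, f x ≤
      (volume (K ∩ Metric.closedBall (0 : EuclideanSpace ℝ (Fin n)) R)).toReal := by
  classical
  set B : Set (EuclideanSpace ℝ (Fin n)) := Metric.closedBall (0 : (EuclideanSpace ℝ (Fin n))) R with hB
  haveI hnt : Nontrivial (EuclideanSpace ℝ (Fin n)) := by
    have : 0 < Module.finrank ℝ (EuclideanSpace ℝ (Fin n)) := by
      rw [finrank_euclideanSpace_fin]; omega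
    exact Module.nontrivial_of_finrank_pos this
  set μ : Measure (EuclideanSpace ℝ (Fin n)) := volume with hμ
  set σ : Measure (Metric.sphere (0:(EuclideanSpace ℝ (Fin n))) 1) := μ.toSphere with hσ
  set ν : Measure (Set.Ioi (0:ℝ)) :=
    Measure.volumeIoiPow (Module.finrank ℝ (EuclideanSpace ℝ (Fin n)) - 1) with hν
  have hKm : MeasurableSet K := hKcpt.isClosed.measurableSet
  have hBm : MeasurableSet B := Metric.isClosed_closedBall.measurableSet
  -- polar coordinate formula for lintegrals
  have polar : ∀ F : (EuclideanSpace ℝ (Fin n)) → ℝ≥0∞, Measurable F →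
      ∫⁻ x, F x ∂μ
        = ∫⁻ θ : Metric.sphere (0:(EuclideanSpace ℝ (Fin n))) 1, ∫⁻ r : Set.Ioi (0:ℝ),
            F ((r : ℝ) • (θ : (EuclideanSpace ℝ (Fin n)))) ∂ν ∂σ := by
    intro F hF
    have hsm : Measurable fun p : Metric.sphere (0:(EuclideanSpace ℝ (Fin n))) 1 × Set.Ioi (0:ℝ) =>
        F ((p.2 : ℝ) • (p.1 : (EuclideanSpace ℝ (Fin n)))) := by
      apply hF.comp
      exact ((continuous_subtype_val.comp continuous_snd).smul
        (continuous_subtype_val.comp continuous_fst)).measurable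
    have t1 : ∫⁻ x : ({0}ᶜ : Set (EuclideanSpace ℝ (Fin n))), F x ∂(μ.comap (↑))
        = ∫⁻ x in ({0}ᶜ : Set (EuclideanSpace ℝ (Fin n))), F x ∂μ := by
      rw [← setLIntegral_univ,
        setLIntegral_subtype (measurableSet_singleton (0:(EuclideanSpace ℝ (Fin n)))).compl
          Set.univ F,
        Set.image_univ, Subtype.range_coe]
    have t2 : ∫⁻ x in ({0}ᶜ : Set (EuclideanSpace ℝ (Fin n))), F x ∂μ = ∫⁻ x, F x ∂μ := by
      rw [restrict_compl_singleton]
    have h1 : ∫⁻ x, F x ∂μ = ∫⁻ x : ({0}ᶜ : Set (EuclideanSpace ℝ (Fin n))), F x ∂(μ.comap (↑)) :=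
      t2.symm.trans t1.symm
    rw [h1]
    have h2 : ∫⁻ x : ({0}ᶜ : Set (EuclideanSpace ℝ (Fin n))), F x ∂(μ.comap (↑))
        = ∫⁻ p : Metric.sphere (0:(EuclideanSpace ℝ (Fin n))) 1 × Set.Ioi (0:ℝ),
            F ((p.2 : ℝ) • (p.1 : (EuclideanSpace ℝ (Fin n)))) ∂(σ.prod ν) := by
      rw [← (μ.measurePreserving_homeomorphUnitSphereProd).lintegral_comp hsm]
      refine lintegral_congr fun x => ?_
      have hx : (x : (EuclideanSpace ℝ (Fin n))) ≠ 0 := x.2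
      simp only [homeomorphUnitSphereProd_apply_snd_coe,
        homeomorphUnitSphereProd_apply_fst_coe, smul_smul]
      rw [mul_inv_cancel₀ (norm_ne_zero_iff.2 hx), one_smul]
    rw [h2, lintegral_prod _ hsm.aemeasurable]
  -- facts about a fixed reference direction
  obtain ⟨e, he⟩ := (NormedSpace.sphere_nonempty
    (x := (0 : EuclideanSpace ℝ (Fin n))) (r := 1)).2 zero_le_one
  have hee : ‖e‖ = 1 := mem_sphere_zero_iff_norm.1 he
  -- the radial profile
  have hradial : ∀ (θ : Metric.sphere (0:(EuclideanSpace ℝ (Fin n))) 1) (r : Set.Ioi (0:ℝ)),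
      f ((r : ℝ) • (θ : (EuclideanSpace ℝ (Fin n)))) = f ((r : ℝ) • e) := by
    intro θ r
    apply hrot
    rw [norm_smul, norm_smul, mem_sphere_zero_iff_norm.1 θ.2, hee]
  have hnorm : ∀ (θ : Metric.sphere (0:(EuclideanSpace ℝ (Fin n))) 1) (r : Set.Ioi (0:ℝ)),
      ‖(r : ℝ) • (θ : (EuclideanSpace ℝ (Fin n)))‖ = (r : ℝ) := by
    intro θ r
    rw [norm_smul, mem_sphere_zero_iff_norm.1 θ.2, mul_one,
      Real.norm_eq_abs, abs_of_pos r.2]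
  set c : ℝ≥0∞ := ∫⁻ r : Set.Ioi (0:ℝ), ENNReal.ofReal (f ((r : ℝ) • e)) ∂ν with hc
  set IB : Set (Set.Ioi (0:ℝ)) := {r | (r : ℝ) ≤ R} with hIB
  have hIBm : MeasurableSet IB := measurable_subtype_coe measurableSet_Iic
  -- global identity 1 : c * σ univ = 1
  have hσuniv : σ Set.univ ≠ 0 ∧ σ Set.univ ≠ ⊤ := by
    constructor
    · rw [hσ, Measure.toSphere_apply_univ]
      refine (ENNReal.mul_pos ?_ ?_).ne'
      · simp [finrank_euclideanSpace_fin]; omega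
      · exact (Metric.measure_ball_pos μ 0 one_pos).ne'
    · exact measure_ne_top _ _
  have key1 : c * σ Set.univ = 1 := by
    have h1 : ∫⁻ x, ENNReal.ofReal (f x) ∂μ = 1 := by
      rw [← ofReal_integral_eq_lintegral_ofReal hint (Filter.Eventually.of_forall h0),
        hint1, ENNReal.ofReal_one]
    rw [polar _ hmeas.ennreal_ofReal] at h1
    calc c * σ Set.univ = ∫⁻ _ : Metric.sphere (0:(EuclideanSpace ℝ (Fin n))) 1, c ∂σ := by
            rw [lintegral_const]
      _ = 1 := by
            rw [← h1]
            refine lintegral_congr fun θ => lintegral_congr fun r => ?_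
            rw [hradial θ r]
  -- global identity 2 : ν IB * σ univ = 1
  have key2 : ν IB * σ Set.univ = 1 := by
    have h1 : ∫⁻ x, B.indicator (fun _ => (1:ℝ≥0∞)) x ∂μ = 1 := by
      rw [lintegral_indicator hBm, setLIntegral_one, hRvol]
    rw [polar _ (measurable_const.indicator hBm)] at h1
    calc ν IB * σ Set.univ = ∫⁻ _ : Metric.sphere (0:(EuclideanSpace ℝ (Fin n))) 1, ν IB ∂σ := by
            rw [lintegral_const]
      _ = 1 := by
            rw [← h1]
            refine lintegral_congr fun θ => ?_
            rw [← setLIntegral_one IB, ← lintegral_indicator hIBm]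
            refine lintegral_congr fun r => ?_
            by_cases hr : (r : ℝ) ≤ R
            · rw [Set.indicator_of_mem (show r ∈ IB from hr) _,
                Set.indicator_of_mem (by
                  rw [hB, Metric.mem_closedBall, dist_zero_right, hnorm θ r]; exact hr)]
            · rw [Set.indicator_of_notMem (show r ∉ IB from hr) _,
                Set.indicator_of_notMem (by
                  rw [hB, Metric.mem_closedBall, dist_zero_right, hnorm θ r]; exact hr)]
  have hcIB : c = ν IB := by
    have hS0 := hσuniv.1
    have hST := hσuniv.2
    have h := key1.trans key2.symm
    have h2 := congrArg (· * (σ Set.univ)⁻¹) h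
    simpa [mul_assoc, ENNReal.mul_inv_cancel hS0 hST] using h2
  -- main lintegral inequality
  have main : ∫⁻ x in K, ENNReal.ofReal (f x) ∂μ ≤ μ (K ∩ B) := by
    rw [← lintegral_indicator hKm, ← setLIntegral_one (K ∩ B),
      ← lintegral_indicator (hKm.inter hBm),
      polar _ (hmeas.ennreal_ofReal.indicator hKm),
      polar _ (measurable_const.indicator (hKm.inter hBm))]
    refine lintegral_mono fun θ => ?_
    by_cases hcase : ∀ r : Set.Ioi (0:ℝ), (r : ℝ) • (θ : (EuclideanSpace ℝ (Fin n))) ∈ K → (r : ℝ) ≤ R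
    · -- K-section contained in (0, R]
      refine lintegral_mono fun r => ?_
      by_cases hrK : (r : ℝ) • (θ : (EuclideanSpace ℝ (Fin n))) ∈ K
      · have hrB : (r : ℝ) • (θ : (EuclideanSpace ℝ (Fin n))) ∈ B := by
          rw [hB, Metric.mem_closedBall, dist_zero_right, hnorm θ r]
          exact hcase r hrK
        rw [Set.indicator_of_mem hrK, Set.indicator_of_mem (Set.mem_inter hrK hrB) (fun _ => (1:ℝ≥0∞))]
        exact ENNReal.ofReal_le_one.2 (hbd _)
      · rw [Set.indicator_of_notMem hrK]
        exact zero_le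
    · -- K-section contains (0, R]
      push_neg at hcase
      obtain ⟨r0, hr0K, hr0R⟩ := hcase
      have step1 : ∫⁻ r : Set.Ioi (0:ℝ),
          K.indicator (fun y => ENNReal.ofReal (f y)) ((r : ℝ) • (θ : (EuclideanSpace ℝ (Fin n)))) ∂ν ≤ c := by
        rw [hc]
        refine lintegral_mono fun r => ?_
        rw [← hradial θ r]
        exact Set.indicator_le_self _ _ _
      have step2 : ν IB ≤ ∫⁻ r : Set.Ioi (0:ℝ),
          (K ∩ B).indicator (fun _ => (1:ℝ≥0∞)) ((r : ℝ) • (θ : (EuclideanSpace ℝ (Fin n)))) ∂ν := by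
        rw [← setLIntegral_one IB, ← lintegral_indicator hIBm]
        refine lintegral_mono fun r => ?_
        by_cases hr : (r : ℝ) ≤ R
        · have hrK : (r : ℝ) • (θ : (EuclideanSpace ℝ (Fin n))) ∈ K := by
            have hl : (r : ℝ) / (r0 : ℝ) ∈ Set.Icc (0:ℝ) 1 := by
              constructor
              · exact div_nonneg (le_of_lt r.2) (le_of_lt (lt_trans hR hr0R))
              · rw [div_le_one (lt_trans hR hr0R)]
                exact le_of_lt (lt_of_le_of_lt hr hr0R)
            have := hKstar _ hr0K _ hl
            rwa [smul_smul, div_mul_cancel₀ _ (ne_of_gt (lt_trans hR hr0R))] at this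
          have hrB : (r : ℝ) • (θ : (EuclideanSpace ℝ (Fin n))) ∈ B := by
            rw [hB, Metric.mem_closedBall, dist_zero_right, hnorm θ r]
            exact hr
          rw [Set.indicator_of_mem (show r ∈ IB from hr) _, Set.indicator_of_mem (Set.mem_inter hrK hrB) (fun _ => (1:ℝ≥0∞))]
        · rw [Set.indicator_of_notMem (show r ∉ IB from hr) _]
          exact zero_le
      exact le_trans step1 (hcIB ▸ step2)
  -- conclude
  have hμKB : μ (K ∩ B) ≠ ⊤ := by
    refine ne_of_lt (lt_of_le_of_lt (measure_mono Set.inter_subset_right) ?_)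
    rw [hRvol]; exact ENNReal.one_lt_top
  rw [← ENNReal.ofReal_le_iff_le_toReal hμKB,
    ofReal_integral_eq_lintegral_ofReal (hint.restrict)
      (Filter.Eventually.of_forall h0)]
  exact main
end

section
/- Let C be a compact convex set in ℝ^N, let θ ∈ S^{n-1} ⊆ ℝⁿ, and let y₁,…,y_N ∈ θ^⊥. For t = (t₁,…,t_N) ∈ ℝ^N, define K_t = [y₁+t₁θ, …, y_N+t_Nθ] C = { Σᵢ cᵢ(yᵢ+tᵢθ) : c ∈ C } ⊆ ℝⁿ. Then the function t ↦ Vol_n(K_t) is convex on ℝ^N and even: Vol_n(K_t) = Vol_n(K_{-t}). -/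
open MeasureTheory

namespace Stmt8Aux

noncomputable def dotLM {N : ℕ} (u : Fin N → ℝ) : (Fin N → ℝ) →ₗ[ℝ] ℝ where
  toFun c := ∑ i, c i * u i
  map_add' c d := by simp [add_mul, Finset.sum_add_distrib]
  map_smul' r c := by simp [Finset.mul_sum, mul_assoc]

noncomputable def sumSmulLM {N : ℕ} {E : Type*} [AddCommGroup E] [Module ℝ E]
    (y : Fin N → E) : (Fin N → ℝ) →ₗ[ℝ] E where
  toFun c := ∑ i, c i • y i
  map_add' c d := by simp [add_smul, Finset.sum_add_distrib]
  map_smul' r c := by simp [smul_smul, Finset.smul_sum]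

lemma vol_compact_convex_real {A : Set ℝ} (hA : IsCompact A) (hc : Convex ℝ A) :
    volume A = ENNReal.ofReal (sSup A - sInf A) := by
  rcases A.eq_empty_or_nonempty with h | h
  · simp [h, Real.sSup_empty, Real.sInf_empty]
  · have h1 : A = Set.Icc (sInf A) (sSup A) := by
      apply Set.Subset.antisymm
      · intro x hx; exact ⟨csInf_le hA.bddBelow hx, le_csSup hA.bddAbove hx⟩
      · exact hc.ordConnected.out (hA.sInf_mem h) (hA.sSup_mem h)
    calc volume A = volume (Set.Icc (sInf A) (sSup A)) := by rw [← h1]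
      _ = ENNReal.ofReal (sSup A - sInf A) := Real.volume_Icc

end Stmt8Aux

open Stmt8Aux

lemma steiner_key {m N : ℕ} {C : Set (Fin N → ℝ)} (hCcpt : IsCompact C) (hCconv : Convex ℝ C)
    (θ : EuclideanSpace ℝ (Fin (m+1))) (hθ : ‖θ‖ = 1)
    (y : Fin N → EuclideanSpace ℝ (Fin (m+1))) (hy : ∀ i, inner ℝ (y i) θ = (0:ℝ))
    (t s : Fin N → ℝ) {a b : ℝ} (ha : 0 ≤ a) (hb : 0 ≤ b) (hab : a + b = 1) :
    volume ((fun c : Fin N → ℝ => ∑ i, c i • (y i + (a • t + b • s) i • θ)) '' C) ≤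
      ENNReal.ofReal a * volume ((fun c : Fin N → ℝ => ∑ i, c i • (y i + t i • θ)) '' C) +
      ENNReal.ofReal b * volume ((fun c : Fin N → ℝ => ∑ i, c i • (y i + s i • θ)) '' C) := by
  -- orthonormal basis with B 0 = θ
  obtain ⟨B, hB⟩ := Orthonormal.exists_orthonormalBasis_extension_of_card_eq (𝕜 := ℝ)
    (by simp) (v := fun _ : Fin (m+1) => θ) (s := {0}) (by
      constructor
      · intro i; simpa using hθ
      · rintro ⟨i, hi⟩ ⟨j, hj⟩ hij
        exact absurd (Subtype.ext ((Set.eq_of_mem_singleton hi).trans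
          (Set.eq_of_mem_singleton hj).symm)) hij)
  have hB0 : B 0 = θ := hB 0 rfl
  have hθθ : (inner ℝ θ θ : ℝ) = 1 := by
    rw [real_inner_self_eq_norm_mul_norm, hθ]; ring
  have hθy : ∀ i, (inner ℝ θ (y i) : ℝ) = 0 := fun i => by rw [real_inner_comm]; exact hy i
  have hBj : ∀ j : Fin m, (inner ℝ (B j.succ) θ : ℝ) = 0 := fun j => by
    rw [← hB0]; exact B.orthonormal.2 (Fin.succ_ne_zero j)
  have hsplit : ∀ (u : Fin N → ℝ) (c : Fin N → ℝ),
      (∑ i, c i • (y i + u i • θ)) = sumSmulLM y c + (dotLM u c) • θ := by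
    intro u c
    show _ = (∑ i, c i • y i) + (∑ i, c i * u i) • θ
    rw [Finset.sum_smul, ← Finset.sum_add_distrib]
    exact Finset.sum_congr rfl fun i _ => by rw [smul_add, smul_smul]
  have hθsum : ∀ c, (inner ℝ θ (sumSmulLM y c) : ℝ) = 0 := by
    intro c
    show (inner ℝ θ (∑ i, c i • y i) : ℝ) = 0
    rw [inner_sum]
    refine Finset.sum_eq_zero fun i _ => ?_
    rw [real_inner_smul_right, hθy, mul_zero]
  have hθK : ∀ (u : Fin N → ℝ) c, (inner ℝ θ (sumSmulLM y c + dotLM u c • θ) : ℝ) = dotLM u c := by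
    intro u c
    rw [inner_add_right, hθsum, real_inner_smul_right, hθθ]; ring
  set ψ : (Fin N → ℝ) → (Fin m → ℝ) := fun c j => (inner ℝ (B j.succ) (sumSmulLM y c) : ℝ) with hψdef
  have hψlin : ∀ (p q : ℝ) (c d : Fin N → ℝ), ψ (p • c + q • d) = p • ψ c + q • ψ d := by
    intro p q c d
    funext j
    simp only [hψdef, map_add, LinearMap.map_smul, inner_add_right, real_inner_smul_right,
      Pi.add_apply, Pi.smul_apply, smul_eq_mul]
  set e : EuclideanSpace ℝ (Fin (m+1)) ≃ᵐ ℝ × (Fin m → ℝ) :=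
    (B.repr.toHomeomorph.toMeasurableEquiv).trans
      ((MeasurableEquiv.toLp 2 (Fin (m+1) → ℝ)).symm.trans
        (MeasurableEquiv.piFinSuccAbove (fun _ => ℝ) 0)) with hedef
  have he : MeasurePreserving (⇑e) volume volume :=
    ((volume_preserving_piFinSuccAbove (fun _ => ℝ) 0).comp
      (EuclideanSpace.volume_preserving_symm_measurableEquiv_toLp (Fin (m+1)))).comp
        B.measurePreserving_repr
  have happ : ∀ x : EuclideanSpace ℝ (Fin (m+1)),
      e x = ((inner ℝ θ x : ℝ), fun j : Fin m => (inner ℝ (B j.succ) x : ℝ)) := by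
    intro x
    show (MeasurableEquiv.piFinSuccAbove (fun _ => ℝ) 0)
      ((MeasurableEquiv.toLp 2 (Fin (m+1) → ℝ)).symm (B.repr x)) = _
    have h1 : ∀ i, ((MeasurableEquiv.toLp 2 (Fin (m+1) → ℝ)).symm (B.repr x)) i
        = (inner ℝ (B i) x : ℝ) := fun i => B.repr_apply_apply x i
    simp only [MeasurableEquiv.piFinSuccAbove, MeasurableEquiv.coe_mk,
      Fin.removeNth, Fin.zero_succAbove, Fin.tail]
    refine Prod.ext ?_ ?_
    · show ((MeasurableEquiv.toLp 2 (Fin (m+1) → ℝ)).symm (B.repr x)) 0 = _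
      rw [h1, hB0]
    · funext j
      show ((MeasurableEquiv.toLp 2 (Fin (m+1) → ℝ)).symm (B.repr x)) ((0:Fin (m+1)).succAbove j) = _
      rw [h1, Fin.zero_succAbove]
  -- continuity facts
  have hcontK : ∀ u : Fin N → ℝ, Continuous fun c : Fin N → ℝ => ∑ i, c i • (y i + u i • θ) :=
    fun u => continuous_finset_sum _ fun i _ => (continuous_apply i).smul continuous_const
  have hcontsum : Continuous fun c : Fin N → ℝ => sumSmulLM y c :=
    (sumSmulLM y).continuous_of_finiteDimensional
  have hcontdot : ∀ u : Fin N → ℝ, Continuous fun c : Fin N → ℝ => dotLM u c :=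
    fun u => (dotLM u).continuous_of_finiteDimensional
  have hcontψ : Continuous ψ :=
    continuous_pi fun j => Continuous.inner continuous_const hcontsum
  -- the image sets in the product space
  have himage : ∀ u : Fin N → ℝ,
      ⇑e '' ((fun c : Fin N → ℝ => ∑ i, c i • (y i + u i • θ)) '' C)
        = (fun c : Fin N → ℝ => ((dotLM u c : ℝ), ψ c)) '' C := by
    intro u
    rw [Set.image_image]
    refine congrFun (congrArg _ (funext fun c => ?_)) C
    rw [hsplit, happ]
    refine Prod.ext (hθK u c) ?_
    funext j
    show (inner ℝ (B j.succ) (sumSmulLM y c + dotLM u c • θ) : ℝ) = _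
    rw [inner_add_right, real_inner_smul_right, hBj]
    simp [hψdef]
  have hScpt : ∀ u : Fin N → ℝ, IsCompact ((fun c : Fin N → ℝ => ((dotLM u c : ℝ), ψ c)) '' C) :=
    fun u => hCcpt.image ((hcontdot u).prodMk hcontψ)
  have hvol : ∀ u : Fin N → ℝ,
      volume ((fun c : Fin N → ℝ => ∑ i, c i • (y i + u i • θ)) '' C)
        = volume ((fun c : Fin N → ℝ => ((dotLM u c : ℝ), ψ c)) '' C) := by
    intro u
    have h2 := (he.symm e).measure_preimage
      ((hCcpt.image (hcontK u)).measurableSet.nullMeasurableSet (μ := volume))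
    rw [← MeasurableEquiv.image_eq_preimage_symm, himage u] at h2
    exact h2.symm
  -- slices
  have hslice : ∀ (u : Fin N → ℝ) (z : Fin m → ℝ),
      (fun r : ℝ => (r, z)) ⁻¹' ((fun c : Fin N → ℝ => ((dotLM u c : ℝ), ψ c)) '' C)
        = (fun c : Fin N → ℝ => (dotLM u c : ℝ)) '' (C ∩ ψ ⁻¹' {z}) := by
    intro u z
    ext r
    constructor
    · rintro ⟨c, hc, hce⟩
      rw [Prod.mk.injEq] at hce
      exact ⟨c, ⟨hc, by rw [Set.mem_preimage, Set.mem_singleton_iff]; exact hce.2⟩, hce.1⟩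
    · rintro ⟨c, ⟨hc, hz⟩, rfl⟩
      refine ⟨c, hc, ?_⟩
      have hz' : ψ c = z := hz
      show ((dotLM u) c, ψ c) = ((dotLM u) c, z)
      rw [hz']
  have hrep : ∀ u : Fin N → ℝ,
      volume ((fun c : Fin N → ℝ => ∑ i, c i • (y i + u i • θ)) '' C)
        = ∫⁻ z, volume ((fun c : Fin N → ℝ => (dotLM u c : ℝ)) '' (C ∩ ψ ⁻¹' {z})) := by
    intro u
    rw [hvol u, MeasureTheory.Measure.volume_eq_prod,
      Measure.prod_apply_symm (hScpt u).measurableSet]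
    simp_rw [hslice u]
  have hmeas : ∀ u : Fin N → ℝ,
      Measurable fun z => volume ((fun c : Fin N → ℝ => (dotLM u c : ℝ)) '' (C ∩ ψ ⁻¹' {z})) := by
    intro u
    have h0 := measurable_measure_prodMk_right (μ := (volume : Measure ℝ))
      (hScpt u).measurableSet
    simpa only [hslice u] using h0
  have hFcpt : ∀ z : Fin m → ℝ, IsCompact (C ∩ ψ ⁻¹' {z}) :=
    fun z => hCcpt.inter_right (isClosed_singleton.preimage hcontψ)
  have hFconv : ∀ z : Fin m → ℝ, Convex ℝ (C ∩ ψ ⁻¹' {z}) := by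
    intro z u hu v hv p q hp hq hpq
    refine ⟨hCconv hu.1 hv.1 hp hq hpq, ?_⟩
    have h1 : ψ (p • u + q • v) = z := by
      rw [hψlin p q u v]
      have hu2 : ψ u = z := hu.2
      have hv2 : ψ v = z := hv.2
      rw [hu2, hv2, ← add_smul, hpq, one_smul]
    simpa using h1
  have hdot : ∀ c : Fin N → ℝ, dotLM (a • t + b • s) c = a * dotLM t c + b * dotLM s c := by
    intro c
    show (∑ i, c i * (a • t + b • s) i) = a * (∑ i, c i * t i) + b * (∑ i, c i * s i)
    rw [Finset.mul_sum, Finset.mul_sum, ← Finset.sum_add_distrib]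
    refine Finset.sum_congr rfl fun i _ => ?_
    simp only [Pi.add_apply, Pi.smul_apply, smul_eq_mul]
    ring
  have hpt : ∀ z : Fin m → ℝ,
      volume ((fun c : Fin N → ℝ => (dotLM (a • t + b • s) c : ℝ)) '' (C ∩ ψ ⁻¹' {z}))
        ≤ ENNReal.ofReal a * volume ((fun c : Fin N → ℝ => (dotLM t c : ℝ)) '' (C ∩ ψ ⁻¹' {z}))
          + ENNReal.ofReal b * volume ((fun c : Fin N → ℝ => (dotLM s c : ℝ)) '' (C ∩ ψ ⁻¹' {z})) := by
    intro z
    rcases (C ∩ ψ ⁻¹' {z}).eq_empty_or_nonempty with hF | hF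
    · simp [hF]
    · have hFc : IsCompact (C ∩ ψ ⁻¹' {z}) := hFcpt z
      have hFv : Convex ℝ (C ∩ ψ ⁻¹' {z}) := hFconv z
      have himc : ∀ u : Fin N → ℝ, IsCompact ((fun c : Fin N → ℝ => (dotLM u c : ℝ)) '' (C ∩ ψ ⁻¹' {z})) :=
        fun u => hFc.image (hcontdot u)
      have himv : ∀ u : Fin N → ℝ, Convex ℝ ((fun c : Fin N → ℝ => (dotLM u c : ℝ)) '' (C ∩ ψ ⁻¹' {z})) :=
        fun u => hFv.linear_image (dotLM u)
      have himn : ∀ u : Fin N → ℝ, ((fun c : Fin N → ℝ => (dotLM u c : ℝ)) '' (C ∩ ψ ⁻¹' {z})).Nonempty :=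
        fun u => hF.image _
      have hvolim : ∀ u : Fin N → ℝ,
          volume ((fun c : Fin N → ℝ => (dotLM u c : ℝ)) '' (C ∩ ψ ⁻¹' {z}))
            = ENNReal.ofReal (sSup ((fun c : Fin N → ℝ => (dotLM u c : ℝ)) '' (C ∩ ψ ⁻¹' {z}))
              - sInf ((fun c : Fin N → ℝ => (dotLM u c : ℝ)) '' (C ∩ ψ ⁻¹' {z}))) :=
        fun u => vol_compact_convex_real (himc u) (himv u)
      have hDnn : ∀ u : Fin N → ℝ,
          sInf ((fun c : Fin N → ℝ => (dotLM u c : ℝ)) '' (C ∩ ψ ⁻¹' {z}))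
            ≤ sSup ((fun c : Fin N → ℝ => (dotLM u c : ℝ)) '' (C ∩ ψ ⁻¹' {z})) := by
        intro u
        obtain ⟨c0, hc0⟩ := hF
        exact le_trans (csInf_le (himc u).bddBelow ⟨c0, hc0, rfl⟩)
          (le_csSup (himc u).bddAbove ⟨c0, hc0, rfl⟩)
      have hsup : sSup ((fun c : Fin N → ℝ => (dotLM (a • t + b • s) c : ℝ)) '' (C ∩ ψ ⁻¹' {z}))
          ≤ a * sSup ((fun c : Fin N → ℝ => (dotLM t c : ℝ)) '' (C ∩ ψ ⁻¹' {z}))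
            + b * sSup ((fun c : Fin N → ℝ => (dotLM s c : ℝ)) '' (C ∩ ψ ⁻¹' {z})) := by
        refine csSup_le (himn _) ?_
        rintro x ⟨c, hc, rfl⟩
        change (dotLM (a • t + b • s)) c ≤ _
        rw [hdot c]
        exact add_le_add
          (mul_le_mul_of_nonneg_left (le_csSup (himc t).bddAbove ⟨c, hc, rfl⟩) ha)
          (mul_le_mul_of_nonneg_left (le_csSup (himc s).bddAbove ⟨c, hc, rfl⟩) hb)
      have hinf : a * sInf ((fun c : Fin N → ℝ => (dotLM t c : ℝ)) '' (C ∩ ψ ⁻¹' {z}))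
            + b * sInf ((fun c : Fin N → ℝ => (dotLM s c : ℝ)) '' (C ∩ ψ ⁻¹' {z}))
          ≤ sInf ((fun c : Fin N → ℝ => (dotLM (a • t + b • s) c : ℝ)) '' (C ∩ ψ ⁻¹' {z})) := by
        refine le_csInf (himn _) ?_
        rintro x ⟨c, hc, rfl⟩
        change _ ≤ (dotLM (a • t + b • s)) c
        rw [hdot c]
        exact add_le_add
          (mul_le_mul_of_nonneg_left (csInf_le (himc t).bddBelow ⟨c, hc, rfl⟩) ha)
          (mul_le_mul_of_nonneg_left (csInf_le (himc s).bddBelow ⟨c, hc, rfl⟩) hb)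
      rw [hvolim (a • t + b • s), hvolim t, hvolim s]
      calc ENNReal.ofReal (sSup ((fun c : Fin N → ℝ => (dotLM (a • t + b • s) c : ℝ)) '' (C ∩ ψ ⁻¹' {z}))
              - sInf ((fun c : Fin N → ℝ => (dotLM (a • t + b • s) c : ℝ)) '' (C ∩ ψ ⁻¹' {z})))
          ≤ ENNReal.ofReal (a * (sSup ((fun c : Fin N → ℝ => (dotLM t c : ℝ)) '' (C ∩ ψ ⁻¹' {z}))
                - sInf ((fun c : Fin N → ℝ => (dotLM t c : ℝ)) '' (C ∩ ψ ⁻¹' {z})))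
              + b * (sSup ((fun c : Fin N → ℝ => (dotLM s c : ℝ)) '' (C ∩ ψ ⁻¹' {z}))
                - sInf ((fun c : Fin N → ℝ => (dotLM s c : ℝ)) '' (C ∩ ψ ⁻¹' {z})))) := by
            refine ENNReal.ofReal_le_ofReal ?_
            have := hsup
            have := hinf
            nlinarith [hsup, hinf]
        _ = ENNReal.ofReal (a * (sSup ((fun c : Fin N → ℝ => (dotLM t c : ℝ)) '' (C ∩ ψ ⁻¹' {z}))
                - sInf ((fun c : Fin N → ℝ => (dotLM t c : ℝ)) '' (C ∩ ψ ⁻¹' {z}))))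
              + ENNReal.ofReal (b * (sSup ((fun c : Fin N → ℝ => (dotLM s c : ℝ)) '' (C ∩ ψ ⁻¹' {z}))
                - sInf ((fun c : Fin N → ℝ => (dotLM s c : ℝ)) '' (C ∩ ψ ⁻¹' {z})))) :=
            ENNReal.ofReal_add (mul_nonneg ha (sub_nonneg.2 (hDnn t)))
              (mul_nonneg hb (sub_nonneg.2 (hDnn s)))
        _ = _ := by rw [ENNReal.ofReal_mul ha, ENNReal.ofReal_mul hb]
  calc volume ((fun c : Fin N → ℝ => ∑ i, c i • (y i + (a • t + b • s) i • θ)) '' C)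
      = ∫⁻ z, volume ((fun c : Fin N → ℝ => (dotLM (a • t + b • s) c : ℝ)) '' (C ∩ ψ ⁻¹' {z})) :=
        hrep (a • t + b • s)
    _ ≤ ∫⁻ z, (ENNReal.ofReal a * volume ((fun c : Fin N → ℝ => (dotLM t c : ℝ)) '' (C ∩ ψ ⁻¹' {z}))
          + ENNReal.ofReal b * volume ((fun c : Fin N → ℝ => (dotLM s c : ℝ)) '' (C ∩ ψ ⁻¹' {z}))) :=
        lintegral_mono hpt
    _ = _ := by
        rw [lintegral_add_left ((hmeas t).const_mul _), lintegral_const_mul _ (hmeas t),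
          lintegral_const_mul _ (hmeas s), ← hrep t, ← hrep s]

lemma even_key {n N : ℕ} {C : Set (Fin N → ℝ)} (hCcpt : IsCompact C)
    (θ : EuclideanSpace ℝ (Fin n)) (y : Fin N → EuclideanSpace ℝ (Fin n))
    (hy : ∀ i, inner ℝ (y i) θ = (0:ℝ)) (t : Fin N → ℝ) :
    volume ((fun c : Fin N → ℝ => ∑ i, c i • (y i + (-t) i • θ)) '' C) =
    volume ((fun c : Fin N → ℝ => ∑ i, c i • (y i + t i • θ)) '' C) := by
  set R := Submodule.reflection (Submodule.span ℝ {θ})ᗮ with hRdef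
  have hRθ : R θ = -θ :=
    Submodule.reflection_mem_subspace_orthogonalComplement_eq_neg
      (by rw [Submodule.orthogonal_orthogonal]; exact Submodule.mem_span_singleton_self θ)
  have hRy : ∀ i, R (y i) = y i := fun i =>
    Submodule.reflection_mem_subspace_eq_self
      (Submodule.mem_orthogonal_singleton_iff_inner_right.2
        (by rw [real_inner_comm]; exact hy i))
  have hRfun : ∀ c : Fin N → ℝ, R (∑ i, c i • (y i + t i • θ)) = ∑ i, c i • (y i + (-t) i • θ) := by
    intro c
    rw [map_sum]
    refine Finset.sum_congr rfl fun i _ => ?_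
    rw [LinearIsometryEquiv.map_smul, LinearIsometryEquiv.map_add, hRy,
      LinearIsometryEquiv.map_smul, hRθ]
    rw [Pi.neg_apply, smul_neg, ← neg_smul]
  have himg : (fun c : Fin N → ℝ => ∑ i, c i • (y i + (-t) i • θ)) '' C
      = ⇑R '' ((fun c : Fin N → ℝ => ∑ i, c i • (y i + t i • θ)) '' C) := by
    rw [Set.image_image]
    exact congrFun (congrArg _ (funext fun c => (hRfun c).symm)) C
  have hcpt : IsCompact ((fun c : Fin N → ℝ => ∑ i, c i • (y i + t i • θ)) '' C) :=
    hCcpt.image (continuous_finset_sum _ fun i _ => (continuous_apply i).smul continuous_const)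
  have hpre : ⇑R '' ((fun c : Fin N → ℝ => ∑ i, c i • (y i + t i • θ)) '' C)
      = ⇑R.symm ⁻¹' ((fun c : Fin N → ℝ => ∑ i, c i • (y i + t i • θ)) '' C) := by
    ext x
    simp only [Set.mem_image, Set.mem_preimage]
    constructor
    · rintro ⟨v, hv, rfl⟩; simpa using hv
    · intro hv; exact ⟨R.symm x, hv, by simp⟩
  rw [himg, hpre]
  exact (R.symm.measurePreserving).measure_preimage hcpt.measurableSet.nullMeasurableSet

theorem stmt8 (n N : ℕ) (C : Set (Fin N → ℝ)) (hCcpt : IsCompact C) (hCconv : Convex ℝ C)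
    (θ : EuclideanSpace ℝ (Fin n)) (hθ : ‖θ‖ = 1)
    (y : Fin N → EuclideanSpace ℝ (Fin n)) (hy : ∀ i, inner ℝ (y i) θ = (0:ℝ)) :
    ConvexOn ℝ Set.univ (fun t : Fin N → ℝ =>
      (volume ((fun c : Fin N → ℝ => ∑ i, c i • (y i + t i • θ)) '' C)).toReal) ∧
    ∀ t : Fin N → ℝ,
      (volume ((fun c : Fin N → ℝ => ∑ i, c i • (y i + (-t) i • θ)) '' C)).toReal =
      (volume ((fun c : Fin N → ℝ => ∑ i, c i • (y i + t i • θ)) '' C)).toReal := by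
  have hn : n ≠ 0 := by
    rintro rfl
    rw [Subsingleton.elim θ 0, norm_zero] at hθ
    exact zero_ne_one hθ
  obtain ⟨m, rfl⟩ := Nat.exists_eq_succ_of_ne_zero hn
  constructor
  · refine ⟨convex_univ, fun t _ s _ a b ha hb hab => ?_⟩
    have key := steiner_key hCcpt hCconv θ hθ y hy t s ha hb hab
    have hfin : ∀ u : Fin N → ℝ,
        volume ((fun c : Fin N → ℝ => ∑ i, c i • (y i + u i • θ)) '' C) ≠ ⊤ :=
      fun u => (hCcpt.image
        (continuous_finset_sum _ fun i _ => (continuous_apply i).smul continuous_const)).measure_lt_top.ne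
    have hne : ENNReal.ofReal a * volume ((fun c : Fin N → ℝ => ∑ i, c i • (y i + t i • θ)) '' C)
        + ENNReal.ofReal b * volume ((fun c : Fin N → ℝ => ∑ i, c i • (y i + s i • θ)) '' C) ≠ ⊤ :=
      ENNReal.add_ne_top.2 ⟨ENNReal.mul_ne_top ENNReal.ofReal_ne_top (hfin t),
        ENNReal.mul_ne_top ENNReal.ofReal_ne_top (hfin s)⟩
    have h2 := ENNReal.toReal_mono hne key
    rw [ENNReal.toReal_add (ENNReal.mul_ne_top ENNReal.ofReal_ne_top (hfin t))
        (ENNReal.mul_ne_top ENNReal.ofReal_ne_top (hfin s)),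
      ENNReal.toReal_mul, ENNReal.toReal_mul, ENNReal.toReal_ofReal ha,
      ENNReal.toReal_ofReal hb] at h2
    simpa [smul_eq_mul] using h2
  · intro t
    rw [even_key hCcpt θ y hy t]
end

section
/- Let M be a convex set in ℝᵐ (m ≥ 2) contained in the positive orthant [0,∞)ᵐ, and let K¹,…,Kᵐ be convex sets in ℝⁿ. Then the M-combination ⊕_M(K¹,…,Kᵐ) = { Σᵢ aᵢ x^{(i)} : x^{(i)} ∈ Kⁱ, a ∈ M } is a convex set in ℝⁿ. -/
theorem stmt15 (n m : ℕ) (hm : 2 ≤ m) (M : Set (Fin m → ℝ)) (hMconv : Convex ℝ M)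
    (hMpos : ∀ a ∈ M, ∀ i, 0 ≤ a i)
    (K : Fin m → Set (EuclideanSpace ℝ (Fin n))) (hK : ∀ i, Convex ℝ (K i)) :
    Convex ℝ {z : EuclideanSpace ℝ (Fin n) | ∃ a ∈ M,
      ∃ x : Fin m → EuclideanSpace ℝ (Fin n), (∀ i, x i ∈ K i) ∧ z = ∑ i, a i • x i} := by
  rintro z ⟨a, haM, x, hx, rfl⟩ z' ⟨b, hbM, y, hy, rfl⟩ s t hs ht hst
  have hcM : (s • a + t • b) ∈ M := hMconv haM hbM hs ht hst
  set c : Fin m → ℝ := s • a + t • b with hc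
  have hsa : ∀ i, 0 ≤ s * a i := fun i => mul_nonneg hs (hMpos a haM i)
  have htb : ∀ i, 0 ≤ t * b i := fun i => mul_nonneg ht (hMpos b hbM i)
  have hci : ∀ i, c i = s * a i + t * b i := fun i => rfl
  refine ⟨c, hcM, fun i => if h : c i = 0 then x i else
      ((s * a i) / c i) • x i + ((t * b i) / c i) • y i, fun i => ?_, ?_⟩
  · by_cases h : c i = 0
    · simpa [h] using hx i
    · have hcpos : 0 < c i := lt_of_le_of_ne (add_nonneg (hsa i) (htb i)) (Ne.symm h)
      simp only [h, dif_neg, not_false_iff]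
      exact hK i (hx i) (hy i) (div_nonneg (hsa i) hcpos.le)
        (div_nonneg (htb i) hcpos.le)
        (by rw [← add_div, ← hci, div_self h])
  · rw [Finset.smul_sum, Finset.smul_sum, ← Finset.sum_add_distrib]
    refine Finset.sum_congr rfl fun i _ => ?_
    by_cases h : c i = 0
    · have h1 : s * a i = 0 := by
        have := hci i; nlinarith [hsa i, htb i]
      have h2 : t * b i = 0 := by
        have := hci i; nlinarith [hsa i, htb i]
      simp [h, h1, h2, smul_smul]
    · simp only [h, dif_neg, not_false_iff, smul_add, smul_smul]
      rw [mul_div_cancel₀ _ h, mul_div_cancel₀ _ h]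
end
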